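/- For all real numbers a, b with 0 < a, 0 < b and a + b ≤ 1, the Ramanujan constant R(a,b) = -ψ(a) - ψ(b) - 2γ satisfies R(a,b) ≥ 4·ln 2 > 2, where ψ is the digamma function and γ is the Euler–Mascheroni constant. -/

import Mathlib

noncomputable def digamma (x : ℝ) : ℝ := deriv (fun y : ℝ => Real.log (Real.Gamma y)) x

noncomputable def RamanujanR (a b : ℝ) : ℝ :=
  -digamma a - digamma b - 2 * Real.eulerMascheroniConstant

open Real Set Filter Topology Finset

private lemma lgDiff {x : ℝ} (hx : 0 < x) :
    DifferentiableAt ℝ (fun y : ℝ => Real.log (Real.Gamma y)) x :=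
  (Real.differentiableAt_Gamma (fun m => by have := Nat.cast_nonneg (α := ℝ) m; linarith)).log
    (Real.Gamma_pos_of_pos hx).ne'

private lemma digamma_mono {x y : ℝ} (hx : 0 < x) (hxy : x ≤ y) : digamma x ≤ digamma y := by
  have hcv : ConvexOn ℝ (Ioi (0:ℝ)) (fun y : ℝ => Real.log (Real.Gamma y)) := by
    simpa [Function.comp_def] using Real.convexOn_log_Gamma
  exact hcv.monotoneOn_deriv (fun z hz => lgDiff hz) hx (lt_of_lt_of_le hx hxy) hxy

private lemma digamma_add_one {x : ℝ} (hx : 0 < x) : digamma (x + 1) = digamma x + 1 / x := by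
  set F := fun y : ℝ => Real.log (Real.Gamma y) with hF
  have h1 : HasDerivAt (fun y : ℝ => F (y + 1)) (deriv F (x + 1)) x :=
    HasDerivAt.comp_add_const x 1 ((lgDiff (by linarith)).hasDerivAt)
  have h2 : HasDerivAt (fun y : ℝ => F y + Real.log y) (deriv F x + 1 / x) x := by
    have := ((lgDiff hx).hasDerivAt).add (Real.hasDerivAt_log hx.ne')
    rw [one_div]; exact this
  have heq : (fun y : ℝ => F y + Real.log y) =ᶠ[𝓝 x] (fun y : ℝ => F (y + 1)) := by
    filter_upwards [eventually_gt_nhds hx] with y hy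
    simp only [hF, Real.Gamma_add_one hy.ne',
      Real.log_mul hy.ne' (Real.Gamma_pos_of_pos hy).ne']
    ring
  exact (h1.unique (h2.congr_of_eventuallyEq heq.symm))

private lemma digamma_add_nat {x : ℝ} (hx : 0 < x) (n : ℕ) :
    digamma (x + n) = digamma x + ∑ k ∈ Finset.range n, 1 / (x + k) := by
  induction n with
  | zero => simp
  | succ n ih =>
    have hxn : 0 < x + n := by positivity
    have : digamma (x + n + 1) = digamma (x + n) + 1 / (x + n) := digamma_add_one hxn
    rw [Finset.sum_range_succ]
    push_cast
    rw [show x + ((n : ℝ) + 1) = x + (n:ℝ) + 1 by ring, this, ih]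
    ring

private lemma digamma_half : digamma (1/2 : ℝ) = -(Real.eulerMascheroniConstant + 2 * Real.log 2) := by
  have hπ : (0:ℝ) < Real.sqrt π := Real.sqrt_pos.mpr Real.pi_pos
  have hG : Real.Gamma (1/2 : ℝ) ≠ 0 := (Real.Gamma_pos_of_pos (by norm_num)).ne'
  have h : HasDerivAt (fun y : ℝ => Real.log (Real.Gamma y))
      ((-Real.sqrt π * (Real.eulerMascheroniConstant + 2 * Real.log 2)) / Real.Gamma (1/2)) (1/2) :=
    Real.hasDerivAt_Gamma_one_half.log hG
  have := h.deriv
  rw [digamma, this, Real.Gamma_one_half_eq]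
  field_simp

private lemma inv_sum_bound {u v w : ℝ} (hu : 0 < u) (hv : 0 < v) (hw : 0 < w)
    (h : u + v ≤ 2 * w) : 2 / w ≤ 1 / u + 1 / v := by
  rw [div_add_div _ _ hu.ne' hv.ne', div_le_div_iff₀ hw (mul_pos hu hv)]
  nlinarith [sq_nonneg (u - v)]

private lemma key {a b : ℝ} (ha : 0 < a) (hb : 0 < b) (hab : a + b ≤ 1) (ha2 : a ≤ 1/2) :
    digamma a + digamma b ≤ 2 * digamma (1/2) := by
  have hb1 : b ≤ 1 := by linarith
  -- for every n, digamma a + digamma b - 2 * digamma (1/2) ≤ 1/(n + 1/2)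
  have main : ∀ n : ℕ, digamma a + digamma b - 2 * digamma (1/2) ≤ 1 / ((n:ℝ) + 1/2) := by
    intro n
    have hha : digamma (a + n) = digamma a + ∑ k ∈ Finset.range n, 1 / (a + k) :=
      digamma_add_nat ha n
    have hhb : digamma (b + n) = digamma b + ∑ k ∈ Finset.range n, 1 / (b + k) :=
      digamma_add_nat hb n
    have hhh : digamma (1/2 + (n:ℝ)) = digamma (1/2) + ∑ k ∈ Finset.range n, 1 / (1/2 + (k:ℝ)) :=
      digamma_add_nat (show (0:ℝ) < 1/2 by norm_num) n
    have hsum : ∑ k ∈ Finset.range n, 2 * (1 / (1/2 + (k:ℝ))) ≤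
        (∑ k ∈ Finset.range n, 1 / (a + k)) + ∑ k ∈ Finset.range n, 1 / (b + k) := by
      rw [← Finset.sum_add_distrib]
      apply Finset.sum_le_sum
      intro k _
      have hk : (0:ℝ) ≤ k := Nat.cast_nonneg k
      have h2 : (2:ℝ) / (1/2 + k) ≤ 1 / (a + k) + 1 / (b + k) :=
        inv_sum_bound (by linarith) (by linarith) (by linarith) (by linarith)
      calc 2 * (1 / (1/2 + (k:ℝ))) = 2 / (1/2 + k) := by ring
        _ ≤ _ := h2
    have h1 : digamma (a + n) ≤ digamma (1/2 + n) :=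
      digamma_mono (by positivity) (by linarith [Nat.cast_nonneg (α := ℝ) n])
    have h2 : digamma (b + n) ≤ digamma (1/2 + n) + 1 / ((n:ℝ) + 1/2) := by
      have e1 : digamma (1/2 + n + 1) = digamma (1/2 + n) + 1 / (1/2 + n) :=
        digamma_add_one (by positivity)
      have e2 : digamma (b + n) ≤ digamma (1/2 + n + 1) :=
        digamma_mono (by positivity) (by linarith)
      rw [e1] at e2
      calc digamma (b + n) ≤ digamma (1/2 + n) + 1 / (1/2 + n) := e2
        _ = digamma (1/2 + n) + 1 / ((n:ℝ) + 1/2) := by ring_nf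
    have hS : (2:ℝ) * (∑ k ∈ Finset.range n, 1 / (1/2 + (k:ℝ))) ≤
        (∑ k ∈ Finset.range n, 1 / (a + k)) + ∑ k ∈ Finset.range n, 1 / (b + k) := by
      rw [Finset.mul_sum]
      simpa [mul_comm] using hsum
    linarith
  -- take n → ∞
  have t : Tendsto (fun n : ℕ => 1 / ((n:ℝ) + 1/2)) atTop (𝓝 0) := by
    simpa [one_div, Pi.inv_def] using
      (Filter.tendsto_atTop_add_const_right atTop (1/2:ℝ)
        tendsto_natCast_atTop_atTop).inv_tendsto_atTop
  have hle : digamma a + digamma b - 2 * digamma (1/2) ≤ 0 := ge_of_tendsto' t main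
  linarith

theorem stmt_0 (a b : ℝ) (ha : 0 < a) (hb : 0 < b) (hab : a + b ≤ 1) :
    RamanujanR a b ≥ 4 * Real.log 2 ∧ 4 * Real.log 2 > 2 := by
  constructor
  · have hkey : digamma a + digamma b ≤ 2 * digamma (1/2) := by
      rcases le_total a b with h | h
      · exact key ha hb hab (by linarith)
      · have := key hb ha (by linarith) (by linarith)
        linarith
    rw [digamma_half] at hkey
    simp only [RamanujanR, ge_iff_le]
    linarith
  · have h : Real.exp (1/2 : ℝ) < 2 := by
      have h1 : Real.exp (1/2 : ℝ) ^ 2 = Real.exp 1 := by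
        rw [← Real.exp_nat_mul]
        norm_num
    
      nlinarith [Real.exp_one_lt_d9, Real.exp_pos (1/2 : ℝ)]
    have : (1/2 : ℝ) < Real.log 2 := by
      rw [Real.lt_log_iff_exp_lt (by norm_num)]
      exact h
    linarith
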